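/- (Necessary optimality condition for open-loop controls.) Let ū and u be open-loop controls, μ̄ and μ solutions of the FPK equation for ū and for u respectively with the same initial law ϑ, and p̄ a bounded C^{1,2} function (with bounded ∂_t p̄, ∇_x p̄, ∇²_x p̄) satisfying ∂_s p̄_s(x) + ∇p̄_s(x)·f(s,x,ū(s)) + Tr(∇²p̄_s(x) D(s,x)) = 0 and p̄_T = ℓ. Assume that for almost every t ∈ I, ∫ ∇p̄_t(x)·f(t,x,u(t)) dμ_t(x) = min over υ ∈ U of ∫ ∇p̄_t(x)·f(t,x,υ) dμ_t(x), and that ū is optimal in the sense that ∫ ℓ dμ̄_T ≤ ∫ ℓ dμ_T. Then for almost every t ∈ I, also ∫ ∇p̄_t(x)·f(t,x,ū(t)) dμ_t(x) = min over υ ∈ U of ∫ ∇p̄_t(x)·f(t,x,υ) dμ_t(x). -/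

import Mathlib

open MeasureTheory intervalIntegral

noncomputable section

/-- Euclidean space ℝⁿ. -/
abbrev Eu (n : ℕ) : Type := EuclideanSpace ℝ (Fin n)

/-- Laplacian of `φ` at `x`: the trace of the Hessian. -/
def lapl {n : ℕ} (φ : Eu n → ℝ) (x : Eu n) : ℝ :=
  ∑ i : Fin n, fderiv ℝ (fun y => fderiv ℝ φ y (EuclideanSpace.single i 1)) x
    (EuclideanSpace.single i 1)

/-- `η` is of class C^{1,2} (C¹ in time, C² in space) and bounded together with
`∂ₜη`, `∇ₓη` and `∇²ₓη`. -/
structure C12Bdd {n : ℕ} (η : ℝ → Eu n → ℝ) : Prop where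
  smooth_t : ∀ x, ContDiff ℝ 1 fun t => η t x
  smooth_x : ∀ t, ContDiff ℝ 2 (η t)
  bdd : ∃ C, ∀ t x, |η t x| ≤ C
  bdd_dt : ∃ C, ∀ t x, |deriv (fun s => η s x) t| ≤ C
  bdd_grad : ∃ C, ∀ t x, ‖gradient (η t) x‖ ≤ C
  bdd_hess : ∃ C, ∀ t x, ‖fderiv ℝ (fderiv ℝ (η t)) x‖ ≤ C

/-- `Tr(∇²φ(x) · D)`: the trace of the product of the Hessian of `φ` at `x` with the
matrix `D`. -/
def hessTr {n : ℕ} (φ : Eu n → ℝ) (x : Eu n) (D : Matrix (Fin n) (Fin n) ℝ) : ℝ :=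
  ∑ i : Fin n, ∑ j : Fin n,
    fderiv ℝ (fun y => fderiv ℝ φ y (EuclideanSpace.single j 1)) x
      (EuclideanSpace.single i 1) * D j i

/-- `μ : [0,T] → P(ℝⁿ)` is a (distributional) solution of the Fokker–Planck–Kolmogorov
equation for the open-loop control `u`, drift `f`, diffusion matrix `D`, with initial
law `ϑ`. -/
def IsFPKol {n m : ℕ} (T : ℝ) (f : ℝ → Eu n → Eu m → Eu n)
    (D : ℝ → Eu n → Matrix (Fin n) (Fin n) ℝ)
    (u : ℝ → Eu m) (ϑ : Measure (Eu n)) (μ : ℝ → Measure (Eu n)) : Prop :=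
  (∀ t, IsProbabilityMeasure (μ t)) ∧
  μ 0 = ϑ ∧
  (∀ φ : Eu n → ℝ, Continuous φ → (∃ C, ∀ x, |φ x| ≤ C) →
    Measurable fun t => ∫ x, φ x ∂μ t) ∧
  (∀ η : ℝ → Eu n → ℝ, C12Bdd η → ∀ t ∈ Set.Icc (0:ℝ) T,
    (∫ x, η t x ∂μ t) - (∫ x, η 0 x ∂μ 0) =
      ∫ s in (0:ℝ)..t, ∫ x, (deriv (fun r => η r x) s
        + (inner ℝ (gradient (η s) x) (f s x (u s)) : ℝ) + hessTr (η s) x (D s x)) ∂μ s)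

section Aux

open Filter Topology ProbabilityTheory
open scoped ENNReal NNReal

theorem NecOpt.meas_fderiv_t {n : ℕ} (pb : ℝ → Eu n → ℝ)
    (hct : ∀ x, ContDiff ℝ 1 fun t => pb t x)
    (hcx : ∀ t, ContDiff ℝ 2 (pb t)) (x v : Eu n) :
    Measurable fun t => fderiv ℝ (pb t) x v := by
  have hdiff : ∀ t, HasDerivAt (fun s : ℝ => pb t (x + s • v)) (fderiv ℝ (pb t) x v) 0 := by
    intro t
    have h1 : DifferentiableAt ℝ (pb t) x :=
      ((hcx t).differentiable (by norm_num)).differentiableAt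
    have hc : HasDerivAt (fun s : ℝ => x + s • v) v 0 := by
      simpa using ((hasDerivAt_id (0:ℝ)).smul_const v).const_add x
    have h1' : HasFDerivAt (pb t) (fderiv ℝ (pb t) x) ((fun s : ℝ => x + s • v) 0) := by
      simpa using h1.hasFDerivAt
    exact h1'.comp_hasDerivAt (0:ℝ) hc
  set sq : ℕ → ℝ := fun k => (k+1 : ℝ)⁻¹ with hsq
  have hsq0 : Tendsto sq atTop (𝓝[≠] (0:ℝ)) := by
    apply tendsto_nhdsWithin_of_tendsto_nhds_of_eventually_within
    · simpa [hsq] using tendsto_one_div_add_atTop_nhds_zero_nat (𝕜 := ℝ)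
    · refine Eventually.of_forall fun k => ?_
      simp only [hsq, Set.mem_compl_iff, Set.mem_singleton_iff]
      positivity
  have htend : ∀ t, Tendsto (fun k => (sq k)⁻¹ * (pb t (x + sq k • v) - pb t x)) atTop
      (𝓝 (fderiv ℝ (pb t) x v)) := by
    intro t
    have := (hasDerivAt_iff_tendsto_slope.mp (hdiff t)).comp hsq0
    refine this.congr fun k => ?_
    simp [Function.comp, slope_def_field, div_eq_inv_mul]
  refine measurable_of_tendsto_metrizable
    (f := fun k t => (sq k)⁻¹ * (pb t (x + sq k • v) - pb t x))
    (fun k => ?_) (tendsto_pi_nhds.mpr htend)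
  exact measurable_const.mul
    (((hct _).continuous.measurable).sub ((hct x).continuous.measurable))

theorem NecOpt.inner_gradient_eq {n : ℕ} (φ : Eu n → ℝ) (x v : Eu n) :
    (inner ℝ (gradient φ x) v : ℝ) = fderiv ℝ φ x v := by
  rw [gradient, ← InnerProductSpace.toDual_apply_apply]
  simp

theorem NecOpt.grad_cont {n : ℕ} (φ : Eu n → ℝ) (h : ContDiff ℝ 2 φ) :
    Continuous fun x => gradient φ x :=
  (InnerProductSpace.toDual ℝ (Eu n)).symm.continuous.comp
    (h.continuous_fderiv (by norm_num))

theorem NecOpt.grad_joint_meas {n : ℕ} (pb : ℝ → Eu n → ℝ)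
    (hct : ∀ x, ContDiff ℝ 1 fun t => pb t x)
    (hcx : ∀ t, ContDiff ℝ 2 (pb t)) :
    Measurable fun p : ℝ × Eu n => gradient (pb p.1) p.2 := by
  have hmt : ∀ x, Measurable fun t => gradient (pb t) x := by
    intro x
    have hco : ∀ t i, gradient (pb t) x i
        = fderiv ℝ (pb t) x (EuclideanSpace.single i 1) := by
      intro t i
      rw [← NecOpt.inner_gradient_eq]
      rw [EuclideanSpace.inner_single_right]
      simp
    refine (WithLp.measurable_toLp 2 (Fin n → ℝ)).comp (f := fun t => (gradient (pb t) x).ofLp) ?_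
    rw [measurable_pi_iff]
    intro i
    simp_rw [hco]
    exact NecOpt.meas_fderiv_t pb hct hcx x _
  have h := measurable_uncurry_of_continuous_of_measurable
    (u := fun (x : Eu n) (t : ℝ) => gradient (pb t) x)
    (fun t => NecOpt.grad_cont (pb t) (hcx t)) hmt
  exact h.comp measurable_swap

theorem NecOpt.meas_mu {n : ℕ} (μ : ℝ → Measure (Eu n))
    (hprob : ∀ t, IsProbabilityMeasure (μ t))
    (hφ : ∀ φ : Eu n → ℝ, Continuous φ → (∃ C, ∀ x, |φ x| ≤ C) →
      Measurable fun t => ∫ x, φ x ∂μ t) :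
    Measurable μ := by
  apply Measure.measurable_of_measurable_coe
  have h_eq : (inferInstance : MeasurableSpace (Eu n))
      = .generateFrom {s : Set (Eu n) | IsClosed s} := by
    rw [BorelSpace.measurable_eq (α := Eu n), borel_eq_generateFrom_isClosed]
  intro A hA
  refine MeasurableSpace.induction_on_inter (C := fun A _ => Measurable fun t => μ t A)
    h_eq (fun s hs t ht _ => hs.inter ht) (by simp) ?_ ?_ ?_ A hA
  · intro A hA
    have hAc : IsClosed A := hA
    have htend : ∀ t, Tendsto (fun k => ∫⁻ x, (hAc.apprSeq k x : ℝ≥0∞) ∂μ t) atTop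
        (𝓝 (μ t A)) := fun t => HasOuterApproxClosed.tendsto_lintegral_apprSeq hAc (μ t)
    refine ENNReal.measurable_of_tendsto
      (f := fun k t => ∫⁻ x, (hAc.apprSeq k x : ℝ≥0∞) ∂μ t)
      (fun k => ?_) (tendsto_pi_nhds.mpr htend)
    have key : ∀ t, (∫⁻ x, (hAc.apprSeq k x : ℝ≥0∞) ∂μ t)
        = ENNReal.ofReal (∫ x, ((hAc.apprSeq k x : ℝ≥0) : ℝ) ∂μ t) := by
      intro t
      rw [ofReal_integral_eq_lintegral_ofReal]
      · congr 1; funext x; simp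
      · haveI := hprob t
        refine ⟨(NNReal.continuous_coe.comp
          (hAc.apprSeq k).continuous).aestronglyMeasurable, ?_⟩
        exact HasFiniteIntegral.of_bounded (C := 1) (Eventually.of_forall fun x => by
          simp only [Real.norm_eq_abs, abs_of_nonneg (NNReal.coe_nonneg _)]
          exact_mod_cast HasOuterApproxClosed.apprSeq_apply_le_one hAc k x)
      · exact Eventually.of_forall fun x => by positivity
    simp_rw [key]
    refine ENNReal.measurable_ofReal.comp (hφ _ ?_ ⟨1, fun x => ?_⟩)
    · exact NNReal.continuous_coe.comp (hAc.apprSeq k).continuous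
    · rw [abs_of_nonneg (by positivity)]
      exact_mod_cast HasOuterApproxClosed.apprSeq_apply_le_one hAc k x
  · intro A hA ih
    haveI := fun t => hprob t
    have hc : ∀ t, μ t Aᶜ = 1 - μ t A := by
      intro t
      rw [measure_compl hA (measure_ne_top _ _), measure_univ]
    simp_rw [hc]
    exact measurable_const.sub ih
  · intro g hdis hg ih
    have hc : ∀ t, μ t (⋃ i, g i) = ∑' i, μ t (g i) := fun t => measure_iUnion hdis hg
    simp_rw [hc]
    exact Measurable.ennreal_tsum ih

theorem NecOpt.meas_int {n : ℕ} (μ : ℝ → Measure (Eu n)) (hmeas : Measurable μ)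
    (hprob : ∀ t, IsProbabilityMeasure (μ t)) (g : ℝ → Eu n → ℝ)
    (hg : Measurable (Function.uncurry g)) :
    Measurable fun t => ∫ x, g t x ∂μ t := by
  let κ : Kernel ℝ (Eu n) := ⟨μ, hmeas⟩
  haveI : IsMarkovKernel κ := ⟨hprob⟩
  have : StronglyMeasurable fun t => ∫ x, g t x ∂κ t :=
    (hg.stronglyMeasurable).integral_kernel_prod_right
  exact this.measurable

theorem NecOpt.ae_zero_of_nonpos (ν : MeasureTheory.Measure ℝ) [IsFiniteMeasure ν] (F : ℝ → ℝ)
    (hFint : Integrable F ν)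
    (hFle' : ∀ᵐ t ∂ν, F t ≤ 0)
    (hIzero : (∫ t, F t ∂ν) = 0) :
    ∀ᵐ t ∂ν, F t = 0 := by
  have hnn : 0 ≤ᵐ[ν] fun t => -F t := by
    filter_upwards [hFle'] with t ht
    simp only [Pi.zero_apply]
    linarith
  have hz : (∫ t, -F t ∂ν) = 0 := by
    rw [MeasureTheory.integral_neg, hIzero, neg_zero]
  have h0 := (integral_eq_zero_iff_of_nonneg_ae hnn hFint.neg).mp hz
  filter_upwards [h0] with t ht
  have h1 : -F t = 0 := ht
  linarith

end Aux

set_option maxHeartbeats 1000000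

theorem necessary_optimality_open_loop
    {n m : ℕ} (hn : 1 ≤ n) (hm : 1 ≤ m) (T : ℝ) (hT : 0 < T)
    (U : Set (Eu m)) (hUne : U.Nonempty) (hUcp : IsCompact U)
    (f : ℝ → Eu n → Eu m → Eu n)
    (hfmeas : Measurable fun p : ℝ × Eu n × Eu m => f p.1 p.2.1 p.2.2)
    (hfbdd : ∃ C, ∀ t x υ, ‖f t x υ‖ ≤ C)
    (D : ℝ → Eu n → Matrix (Fin n) (Fin n) ℝ)
    (hDcont : Continuous fun p : ℝ × Eu n => D p.1 p.2)
    (hDbdd : ∃ C, ∀ t x i j, |D t x i j| ≤ C)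
    (hDpsd : ∀ t x, (D t x).PosSemidef) (hDsymm : ∀ t x, (D t x).IsSymm)
    (ℓ : Eu n → ℝ) (hℓ : ContDiff ℝ 2 ℓ) (hℓbdd : ∃ C, ∀ x, |ℓ x| ≤ C)
    (ub : ℝ → Eu m) (hubmeas : Measurable ub) (hubU : ∀ t, ub t ∈ U)
    (u : ℝ → Eu m) (humeas : Measurable u) (huU : ∀ t, u t ∈ U)
    (ϑ : Measure (Eu n)) (μb μ : ℝ → Measure (Eu n))
    (hFPKb : IsFPKol T f D ub ϑ μb) (hFPK : IsFPKol T f D u ϑ μ)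
    (pb : ℝ → Eu n → ℝ) (hpb : C12Bdd pb)
    (hpde : ∀ s ∈ Set.Icc (0:ℝ) T, ∀ x : Eu n,
      deriv (fun r => pb r x) s + (inner ℝ (gradient (pb s) x) (f s x (ub s)) : ℝ)
        + hessTr (pb s) x (D s x) = 0)
    (hterm : ∀ x, pb T x = ℓ x)
    (hmin : ∀ᵐ t ∂(volume.restrict (Set.Icc (0:ℝ) T)), ∀ υ ∈ U,
      (∫ x, (inner ℝ (gradient (pb t) x) (f t x (u t)) : ℝ) ∂μ t) ≤
        ∫ x, (inner ℝ (gradient (pb t) x) (f t x υ) : ℝ) ∂μ t)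
    (hopt : (∫ x, ℓ x ∂μb T) ≤ ∫ x, ℓ x ∂μ T) :
    ∀ᵐ t ∂(volume.restrict (Set.Icc (0:ℝ) T)), ∀ υ ∈ U,
      (∫ x, (inner ℝ (gradient (pb t) x) (f t x (ub t)) : ℝ) ∂μ t) ≤
        ∫ x, (inner ℝ (gradient (pb t) x) (f t x υ) : ℝ) ∂μ t := by
  obtain ⟨hprob, hinit, hmeasφ, hweak⟩ := hFPK
  obtain ⟨hprobb, hinitb, hmeasφb, hweakb⟩ := hFPKb
  obtain ⟨Cg, hCg⟩ := hpb.bdd_grad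
  obtain ⟨Cf, hCf⟩ := hfbdd
  set A : ℝ → Eu n → ℝ := fun t x => (inner ℝ (gradient (pb t) x) (f t x (u t)) : ℝ) with hA
  set B : ℝ → Eu n → ℝ := fun t x => (inner ℝ (gradient (pb t) x) (f t x (ub t)) : ℝ) with hB
  -- pointwise bound
  have hbd : ∀ (t : ℝ) (x : Eu n) (w : Eu n), ‖w‖ ≤ Cf →
      |(inner ℝ (gradient (pb t) x) w : ℝ)| ≤ Cg * Cf := by
    intro t x w hw
    calc |(inner ℝ (gradient (pb t) x) w : ℝ)| ≤ ‖gradient (pb t) x‖ * ‖w‖ :=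
          abs_real_inner_le_norm _ _
      _ ≤ Cg * Cf := by
          apply mul_le_mul (hCg t x) hw (norm_nonneg _)
          exact le_trans (norm_nonneg _) (hCg t x)
  -- sectionwise measurability & integrability
  have hmeasfx : ∀ (t : ℝ) (v : ℝ → Eu m), Measurable v →
      Measurable fun x => f t x (v t) :=
    fun t v hv => hfmeas.comp
      (measurable_const.prodMk (measurable_id.prodMk measurable_const))
  have hmeasA : ∀ t, Measurable (A t) := fun t =>
    Measurable.inner ((NecOpt.grad_cont _ (hpb.smooth_x t)).measurable)
      (hmeasfx t u humeas)
  have hmeasB : ∀ t, Measurable (B t) := fun t =>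
    Measurable.inner ((NecOpt.grad_cont _ (hpb.smooth_x t)).measurable)
      (hmeasfx t ub hubmeas)
  have hIntA : ∀ t, Integrable (A t) (μ t) := by
    intro t
    haveI := hprob t
    exact ⟨(hmeasA t).aestronglyMeasurable, HasFiniteIntegral.of_bounded (C := Cg * Cf)
      (Filter.Eventually.of_forall fun x => by
        simpa only [Real.norm_eq_abs, hA] using hbd t x _ (hCf t x (u t)))⟩
  have hIntB : ∀ t, Integrable (B t) (μ t) := by
    intro t
    haveI := hprob t
    exact ⟨(hmeasB t).aestronglyMeasurable, HasFiniteIntegral.of_bounded (C := Cg * Cf)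
      (Filter.Eventually.of_forall fun x => by
        simpa only [Real.norm_eq_abs, hB] using hbd t x _ (hCf t x (ub t)))⟩
  have hTmem : T ∈ Set.Icc (0:ℝ) T := ⟨hT.le, le_rfl⟩
  -- FPK identity for μb : the integrand vanishes by the PDE
  have h1 := hweakb pb hpb T hTmem
  have h1z : (∫ x, pb T x ∂μb T) - (∫ x, pb 0 x ∂μb 0) = 0 := by
    have key : Set.EqOn (fun s => ∫ x, (deriv (fun r => pb r x) s
        + (inner ℝ (gradient (pb s) x) (f s x (ub s)) : ℝ) + hessTr (pb s) x (D s x)) ∂μb s)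
        (fun _ => (0:ℝ)) (Set.uIcc (0:ℝ) T) := by
      intro s hs
      rw [Set.uIcc_of_le hT.le] at hs
      have hz : (fun x => deriv (fun r => pb r x) s
          + (inner ℝ (gradient (pb s) x) (f s x (ub s)) : ℝ) + hessTr (pb s) x (D s x))
          = fun _ => (0:ℝ) := funext fun x => hpde s hs x
      show (∫ x, (deriv (fun r => pb r x) s
          + (inner ℝ (gradient (pb s) x) (f s x (ub s)) : ℝ) + hessTr (pb s) x (D s x)) ∂μb s)
          = (0:ℝ)
      rw [hz, MeasureTheory.integral_zero]
    rw [h1, intervalIntegral.integral_congr key, intervalIntegral.integral_zero]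
  -- FPK identity for μ : the integrand becomes A - B
  have h2 := hweak pb hpb T hTmem
  set F : ℝ → ℝ := fun s => ∫ x, (A s x - B s x) ∂μ s with hF
  have h2' : (∫ x, pb T x ∂μ T) - (∫ x, pb 0 x ∂μ 0) = ∫ s in (0:ℝ)..T, F s := by
    have key : Set.EqOn (fun s => ∫ x, (deriv (fun r => pb r x) s
        + (inner ℝ (gradient (pb s) x) (f s x (u s)) : ℝ) + hessTr (pb s) x (D s x)) ∂μ s)
        (fun s => ∫ x, (A s x - B s x) ∂μ s) (Set.uIcc (0:ℝ) T) := by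
      intro s hs
      rw [Set.uIcc_of_le hT.le] at hs
      have hz : (fun x => deriv (fun r => pb r x) s
          + (inner ℝ (gradient (pb s) x) (f s x (u s)) : ℝ) + hessTr (pb s) x (D s x))
          = fun x => A s x - B s x := by
        funext x
        have h0 := hpde s hs x
        simp only [hA, hB]
        linarith
      show (∫ x, (deriv (fun r => pb r x) s
          + (inner ℝ (gradient (pb s) x) (f s x (u s)) : ℝ) + hessTr (pb s) x (D s x)) ∂μ s)
          = ∫ x, (A s x - B s x) ∂μ s
      rw [hz]
    rw [h2, intervalIntegral.integral_congr key]
  -- value of the integral of F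
  have hgrand : 0 ≤ ∫ s in (0:ℝ)..T, F s := by
    have eT : (∫ x, pb T x ∂μ T) = ∫ x, ℓ x ∂μ T := by simp_rw [hterm]
    have eTb : (∫ x, pb T x ∂μb T) = ∫ x, ℓ x ∂μb T := by simp_rw [hterm]
    rw [← h2', hinit]
    rw [eTb, hinitb] at h1z
    rw [eT]
    linarith
  rw [intervalIntegral.integral_of_le hT.le] at hgrand
  -- measurability of F
  have hgradjm : Measurable fun p : ℝ × Eu n => gradient (pb p.1) p.2 :=
    NecOpt.grad_joint_meas pb hpb.smooth_t hpb.smooth_x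
  have hfum : Measurable fun p : ℝ × Eu n => f p.1 p.2 (u p.1) :=
    hfmeas.comp (measurable_fst.prodMk
      (measurable_snd.prodMk (humeas.comp measurable_fst)))
  have hfubm : Measurable fun p : ℝ × Eu n => f p.1 p.2 (ub p.1) :=
    hfmeas.comp (measurable_fst.prodMk
      (measurable_snd.prodMk (hubmeas.comp measurable_fst)))
  have hGm : Measurable (Function.uncurry fun t x => A t x - B t x) :=
    (Measurable.inner hgradjm hfum).sub (Measurable.inner hgradjm hfubm)
  have hFm : Measurable F :=
    NecOpt.meas_int μ (NecOpt.meas_mu μ hprob hmeasφ) hprob _ hGm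
  -- F is bounded, hence integrable on Ioc 0 T
  have hFbd : ∀ t, |F t| ≤ Cg * Cf + Cg * Cf := by
    intro t
    haveI := hprob t
    have := norm_integral_le_of_norm_le_const (μ := μ t)
      (f := fun x => A t x - B t x) (C := Cg * Cf + Cg * Cf)
      (Filter.Eventually.of_forall fun x => by
        have h1 := hbd t x _ (hCf t x (u t))
        have h2 := hbd t x _ (hCf t x (ub t))
        simp only [Real.norm_eq_abs]
        calc |A t x - B t x| ≤ |A t x| + |B t x| := abs_sub _ _
          _ ≤ Cg * Cf + Cg * Cf := by exact add_le_add h1 h2)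
    simpa [measure_univ, Real.norm_eq_abs] using this
  have hFint : IntegrableOn F (Set.Ioc (0:ℝ) T) := by
    refine ⟨hFm.aestronglyMeasurable, HasFiniteIntegral.of_bounded
      (C := Cg * Cf + Cg * Cf) (Filter.Eventually.of_forall fun t => ?_)⟩
    simpa [Real.norm_eq_abs] using hFbd t
  have hFeq : ∀ t, F t = (∫ x, A t x ∂μ t) - ∫ x, B t x ∂μ t :=
    fun t => integral_sub (hIntA t) (hIntB t)
  clear_value F
  -- F ≤ 0 a.e. on Icc
  have hFle : ∀ᵐ t ∂(volume.restrict (Set.Icc (0:ℝ) T)), F t ≤ 0 := by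
    filter_upwards [hmin] with t ht
    have hab : (∫ x, A t x ∂μ t) ≤ ∫ x, B t x ∂μ t := ht (ub t) (hubU t)
    have := hFeq t
    linarith
  have hFle' : ∀ᵐ t ∂(volume.restrict (Set.Ioc (0:ℝ) T)), F t ≤ 0 :=
    ae_restrict_of_ae_restrict_of_subset Set.Ioc_subset_Icc_self hFle
  have hle0 : (∫ t in Set.Ioc (0:ℝ) T, F t) ≤ 0 := integral_nonpos_of_ae hFle'
  have hIzero : (∫ t in Set.Ioc (0:ℝ) T, F t) = 0 := le_antisymm hle0 hgrand
  have hF0 : ∀ᵐ t ∂(volume.restrict (Set.Ioc (0:ℝ) T)), F t = 0 :=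
    NecOpt.ae_zero_of_nonpos (volume.restrict (Set.Ioc (0:ℝ) T)) F hFint hFle' hIzero
  have hF0' : ∀ᵐ t ∂(volume.restrict (Set.Icc (0:ℝ) T)), F t = 0 := by
    rwa [← Measure.restrict_congr_set MeasureTheory.Ioc_ae_eq_Icc]
  -- conclusion
  filter_upwards [hmin, hF0'] with t ht hFt
  intro υ hυ
  have hsub := hFeq t
  have hab : (∫ x, B t x ∂μ t) = ∫ x, A t x ∂μ t := by linarith [hFt, hsub]
  calc (∫ x, B t x ∂μ t) = ∫ x, A t x ∂μ t := hab
    _ ≤ ∫ x, (inner ℝ (gradient (pb t) x) (f t x υ) : ℝ) ∂μ t := ht υ hυ
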